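/- Let Γ=(G,σ) be a weighted signed graph with at least one edge. Then the largest eigenvalue of the signed Laplacian satisfies λ_N(L^σ) ≤ ½ · max_{u∼v} [ d(u) + d(v) + Σ_{u'∼u, u'≁v} w(u',u) + Σ_{u'∼u, u'∼v, σ(u',u)σ(u',v)=−σ(u,v)} w(u',u) + Σ_{u'∼v, u'≁u} w(u',v) + Σ_{u'∼u, u'∼v, σ(u',u)σ(u',v)=−σ(u,v)} w(u',v) + Σ_{u'∼u, u'∼v, σ(u',u)σ(u',v)=σ(u,v)} |w(u',u) − w(u',v)| ], where the maximum runs over all adjacent pairs u ∼ v. -/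

import Mathlib

open Finset Real

open scoped Classical

noncomputable section

namespace SignedGraph

variable {N : ℕ}

/-- The degree `d(u) = Σ_v w(u,v)` of a vertex. -/
def deg (w : Fin N → Fin N → ℝ) (u : Fin N) : ℝ := ∑ v, w u v

/-- Hypotheses making `(w, sgn)` a weighted signed graph: `w` is a symmetric nonnegative
weight function vanishing on the diagonal and `sgn` is a symmetric `±1`-valued signature. -/
structure IsWSG {N : ℕ} (w : Fin N → Fin N → ℝ) (sgn : Fin N → Fin N → ℝ) : Prop where
  w_symm : ∀ u v, w u v = w v u
  w_nonneg : ∀ u v, 0 ≤ w u v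
  w_loopless : ∀ u, w u u = 0
  sgn_symm : ∀ u v, sgn u v = sgn v u
  sgn_pm : ∀ u v, sgn u v = 1 ∨ sgn u v = -1

/-- The signature obtained from `sgn` by switching with the function `θ : V → {±1}`. -/
def switchSgn (sgn : Fin N → Fin N → ℝ) (θ : Fin N → ℝ) : Fin N → Fin N → ℝ :=
  fun u v => θ u * sgn u v * θ v

/-- The signed adjacency matrix `A^σ`, `A^σ_{uv} = σ(u,v) w(u,v)`. -/
def adj (w sgn : Fin N → Fin N → ℝ) : Matrix (Fin N) (Fin N) ℝ :=
  Matrix.of fun u v => sgn u v * w u v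

/-- The symmetric form `I - D^{-1/2} A^σ D^{-1/2}` of the signed normalized Laplacian,
whose eigenvalues are those of `Δ^σ = I - D^{-1} A^σ`. -/
def nlapSym (w sgn : Fin N → Fin N → ℝ) : Matrix (Fin N) (Fin N) ℝ :=
  Matrix.of fun u v =>
    (if u = v then (1 : ℝ) else 0) -
      sgn u v * w u v / (Real.sqrt (deg w u) * Real.sqrt (deg w v))

/-- The signed (Kirchhoff) Laplacian `L^σ = D - A^σ`. -/
def lap (w sgn : Fin N → Fin N → ℝ) : Matrix (Fin N) (Fin N) ℝ :=
  Matrix.diagonal (deg w) - adj w sgn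

/-- The nondecreasing enumeration of the eigenvalues (with multiplicity) of a real
symmetric matrix; junk value `0` if the matrix is not symmetric.  `evals M ⟨k-1,_⟩`
is the `k`-th smallest eigenvalue `λ_k(M)`. -/
def evals (M : Matrix (Fin N) (Fin N) ℝ) : Fin N → ℝ :=
  if h : M.IsHermitian then (fun i => h.eigenvalues (Tuple.sort h.eigenvalues i)) else 0

def bracket (w sgn : Fin N → Fin N → ℝ) (u v : Fin N) : ℝ :=
  deg w u + deg w v
    + (∑ u', if 0 < w u' u ∧ ¬ 0 < w u' v then w u' u else 0)
    + (∑ u', if 0 < w u' u ∧ 0 < w u' v ∧ sgn u' u * sgn u' v = -sgn u v then w u' u else 0)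
    + (∑ u', if 0 < w u' v ∧ ¬ 0 < w u' u then w u' v else 0)
    + (∑ u', if 0 < w u' u ∧ 0 < w u' v ∧ sgn u' u * sgn u' v = -sgn u v then w u' v else 0)
    + (∑ u', if 0 < w u' u ∧ 0 < w u' v ∧ sgn u' u * sgn u' v = sgn u v then |w u' u - w u' v| else 0)


lemma bracket_nonneg (w sgn : Fin N → Fin N → ℝ) (hG : IsWSG w sgn) (u v : Fin N) :
    0 ≤ bracket w sgn u v := by
  have hd : ∀ a, 0 ≤ deg w a := fun a => Finset.sum_nonneg fun b _ => hG.w_nonneg a b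
  have hs : ∀ (f : Fin N → ℝ) (p : Fin N → Prop) [DecidablePred p], (∀ b, 0 ≤ f b) →
      0 ≤ ∑ b, if p b then f b else 0 := by
    intro f p _ hf
    refine Finset.sum_nonneg fun b _ => ?_
    split
    · exact hf b
    · exact le_refl 0
  unfold bracket
  have habs : ∀ b : Fin N, (0:ℝ) ≤ |w b u - w b v| := fun b => abs_nonneg _
  repeat' apply add_nonneg
  · exact hd u
  · exact hd v
  · exact hs _ _ fun b => hG.w_nonneg b u
  · exact hs _ _ fun b => hG.w_nonneg b u
  · exact hs _ _ fun b => hG.w_nonneg b v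
  · exact hs _ _ fun b => hG.w_nonneg b v
  · exact hs _ _ habs

lemma mulVec_lap (w sgn : Fin N → Fin N → ℝ) (x : Fin N → ℝ) (a : Fin N) :
    (lap w sgn).mulVec x a = ∑ b, w a b * (x a - sgn a b * x b) := by
  have h1 : (lap w sgn).mulVec x a
      = ∑ b, ((if a = b then deg w a else 0) - sgn a b * w a b) * x b := by
    simp only [Matrix.mulVec, dotProduct]
    refine Finset.sum_congr rfl fun b _ => ?_
    simp [lap, adj, Matrix.sub_apply, Matrix.diagonal_apply]
  rw [h1]
  have h2 : ∑ b, ((if a = b then deg w a else 0) - sgn a b * w a b) * x b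
      = (∑ b, (if a = b then deg w a * x b else 0)) - ∑ b, sgn a b * w a b * x b := by
    rw [← Finset.sum_sub_distrib]
    refine Finset.sum_congr rfl fun b _ => ?_
    split <;> ring
  rw [h2, Finset.sum_ite_eq, if_pos (Finset.mem_univ a), deg, Finset.sum_mul,
    ← Finset.sum_sub_distrib]
  exact Finset.sum_congr rfl fun b _ => by ring


lemma term_bound (w sgn : Fin N → Fin N → ℝ) (hG : IsWSG w sgn) (x : Fin N → ℝ)
    (u v b : Fin N) (m : ℝ)
    (hP : ∀ a c, 0 < w a c → |x a - sgn a c * x c| ≤ m)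
    (huv : 0 < w u v) :
    2 * |w u b * (x u - sgn u b * x b) - sgn u v * (w v b * (x v - sgn v b * x b))|
      ≤ ((w u b + w v b)
        + (if 0 < w b u ∧ ¬ 0 < w b v then w b u else 0)
        + (if 0 < w b u ∧ 0 < w b v ∧ sgn b u * sgn b v = -sgn u v then w b u else 0)
        + (if 0 < w b v ∧ ¬ 0 < w b u then w b v else 0)
        + (if 0 < w b u ∧ 0 < w b v ∧ sgn b u * sgn b v = -sgn u v then w b v else 0)
        + (if 0 < w b u ∧ 0 < w b v ∧ sgn b u * sgn b v = sgn u v then |w b u - w b v| else 0))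
        * m := by
  have hm0 : 0 ≤ m := le_trans (abs_nonneg _) (hP u v huv)
  have hsu : |sgn u v| = 1 := by rcases hG.sgn_pm u v with h | h <;> rw [h] <;> norm_num
  have hwub : w u b = w b u := hG.w_symm u b
  have hwvb : w v b = w b v := hG.w_symm v b
  by_cases hbu : 0 < w b u <;> by_cases hbv : 0 < w b v
  · -- adjacent to both
    have hA : |x u - sgn u b * x b| ≤ m := hP u b (by rwa [hwub])
    have hB : |x v - sgn v b * x b| ≤ m := hP v b (by rwa [hwvb])
    by_cases hc : sgn b u * sgn b v = sgn u v
    · -- matched signs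
      have hne : ¬ (sgn b u * sgn b v = -sgn u v) := by
        intro h
        rw [hc] at h
        rcases hG.sgn_pm u v with h' | h' <;> rw [h'] at h <;> norm_num at h
      simp only [if_pos (by exact ⟨hbu, hbv, hc⟩ : 0 < w b u ∧ 0 < w b v ∧ sgn b u * sgn b v = sgn u v),
        if_neg (fun h : 0 < w b u ∧ 0 < w b v ∧ sgn b u * sgn b v = -sgn u v => hne h.2.2),
        if_neg (fun h : 0 < w b u ∧ ¬ 0 < w b v => h.2 hbv),
        if_neg (fun h : 0 < w b v ∧ ¬ 0 < w b u => h.2 hbu), add_zero]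
      have hC : |x u - sgn u v * x v| ≤ m := hP u v huv
      have hss : sgn u v * sgn v b = sgn u b := by
        have h2 : sgn v b * sgn v b = 1 := by
          rcases hG.sgn_pm v b with h | h <;> rw [h] <;> norm_num
        have hc' : sgn u b * sgn v b = sgn u v := by
          rw [hG.sgn_symm u b, hG.sgn_symm v b]; exact hc
        calc sgn u v * sgn v b = sgn u b * (sgn v b * sgn v b) := by rw [← hc']; ring
          _ = sgn u b := by rw [h2, mul_one]
      rcases le_total (w u b) (w v b) with h | h
      · have hid : w u b * (x u - sgn u b * x b) - sgn u v * (w v b * (x v - sgn v b * x b))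
            = w u b * (x u - sgn u v * x v) - sgn u v * ((w v b - w u b) * (x v - sgn v b * x b)) := by
          linear_combination (w u b * x b) * hss
        rw [hid]
        have habs : |w u b * (x u - sgn u v * x v) - sgn u v * ((w v b - w u b) * (x v - sgn v b * x b))|
            ≤ w u b * m + (w v b - w u b) * m := by
          refine le_trans (abs_sub _ _) ?_
          gcongr
          · rw [abs_mul, abs_of_nonneg (hG.w_nonneg u b)]
            exact mul_le_mul_of_nonneg_left hC (hG.w_nonneg u b)
          · rw [abs_mul, hsu, one_mul, abs_mul, abs_of_nonneg (by linarith : (0:ℝ) ≤ w v b - w u b)]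
            exact mul_le_mul_of_nonneg_left hB (by linarith)
        have hd : |w b u - w b v| = w b v - w b u := by
          rw [abs_sub_comm, abs_of_nonneg (by rw [← hwub, ← hwvb]; linarith)]
        rw [hd]
        nlinarith [habs]
      · have hid : w u b * (x u - sgn u b * x b) - sgn u v * (w v b * (x v - sgn v b * x b))
            = w v b * (x u - sgn u v * x v) + ((w u b - w v b) * (x u - sgn u b * x b)) := by
          linear_combination (w v b * x b) * hss
        rw [hid]
        have habs : |w v b * (x u - sgn u v * x v) + ((w u b - w v b) * (x u - sgn u b * x b))|
            ≤ w v b * m + (w u b - w v b) * m := by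
          refine le_trans (abs_add_le _ _) ?_
          gcongr
          · rw [abs_mul, abs_of_nonneg (hG.w_nonneg v b)]
            exact mul_le_mul_of_nonneg_left hC (hG.w_nonneg v b)
          · rw [abs_mul, abs_of_nonneg (by linarith : (0:ℝ) ≤ w u b - w v b)]
            exact mul_le_mul_of_nonneg_left hA (by linarith)
        have hd : |w b u - w b v| = w b u - w b v := by
          rw [abs_of_nonneg (by rw [← hwub, ← hwvb]; linarith)]
        rw [hd]
        nlinarith [habs]
    · -- mismatched signs
      have hneg : sgn b u * sgn b v = -sgn u v := by
        rcases hG.sgn_pm b u with h1 | h1 <;> rcases hG.sgn_pm b v with h2 | h2 <;>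
          rcases hG.sgn_pm u v with h3 | h3 <;> rw [h1, h2, h3] at hc ⊢ <;> norm_num at hc <;> norm_num
      simp only [if_pos (show 0 < w b u ∧ 0 < w b v ∧ sgn b u * sgn b v = -sgn u v from ⟨hbu, hbv, hneg⟩),
        if_neg (fun h : 0 < w b u ∧ 0 < w b v ∧ sgn b u * sgn b v = sgn u v => hc h.2.2),
        if_neg (fun h : 0 < w b u ∧ ¬ 0 < w b v => h.2 hbv),
        if_neg (fun h : 0 < w b v ∧ ¬ 0 < w b u => h.2 hbu), add_zero]
      have habs : |w u b * (x u - sgn u b * x b) - sgn u v * (w v b * (x v - sgn v b * x b))|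
          ≤ w u b * m + w v b * m := by
        refine le_trans (abs_sub _ _) ?_
        gcongr
        · rw [abs_mul, abs_of_nonneg (hG.w_nonneg u b)]
          exact mul_le_mul_of_nonneg_left hA (hG.w_nonneg u b)
        · rw [abs_mul, hsu, one_mul, abs_mul, abs_of_nonneg (hG.w_nonneg v b)]
          exact mul_le_mul_of_nonneg_left hB (hG.w_nonneg v b)
      nlinarith [habs]
  · -- adjacent only to u
    have hv0 : w v b = 0 := by rw [hwvb]; exact le_antisymm (not_lt.mp hbv) (hG.w_nonneg b v)
    have hA : |x u - sgn u b * x b| ≤ m := hP u b (by rwa [hwub])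
    simp only [if_pos (show 0 < w b u ∧ ¬ 0 < w b v from ⟨hbu, hbv⟩),
      if_neg (fun h : 0 < w b v ∧ ¬ 0 < w b u => hbv h.1),
      if_neg (fun h : 0 < w b u ∧ 0 < w b v ∧ sgn b u * sgn b v = -sgn u v => hbv h.2.1),
      if_neg (fun h : 0 < w b u ∧ 0 < w b v ∧ sgn b u * sgn b v = sgn u v => hbv h.2.1), add_zero]
    rw [hv0]
    have habs : |w u b * (x u - sgn u b * x b) - sgn u v * (0 * (x v - sgn v b * x b))|
        ≤ w u b * m := by
      rw [zero_mul, mul_zero, sub_zero, abs_mul, abs_of_nonneg (hG.w_nonneg u b)]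
      exact mul_le_mul_of_nonneg_left hA (hG.w_nonneg u b)
    nlinarith [habs, hG.w_nonneg b u, hwub]
  · -- adjacent only to v
    have hu0 : w u b = 0 := by rw [hwub]; exact le_antisymm (not_lt.mp hbu) (hG.w_nonneg b u)
    have hB : |x v - sgn v b * x b| ≤ m := hP v b (by rwa [hwvb])
    simp only [if_pos (show 0 < w b v ∧ ¬ 0 < w b u from ⟨hbv, hbu⟩),
      if_neg (fun h : 0 < w b u ∧ ¬ 0 < w b v => hbu h.1),
      if_neg (fun h : 0 < w b u ∧ 0 < w b v ∧ sgn b u * sgn b v = -sgn u v => hbu h.1),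
      if_neg (fun h : 0 < w b u ∧ 0 < w b v ∧ sgn b u * sgn b v = sgn u v => hbu h.1), add_zero]
    rw [hu0]
    have habs : |0 * (x u - sgn u b * x b) - sgn u v * (w v b * (x v - sgn v b * x b))|
        ≤ w v b * m := by
      rw [zero_mul, zero_sub, abs_neg, abs_mul, hsu, one_mul, abs_mul,
        abs_of_nonneg (hG.w_nonneg v b)]
      exact mul_le_mul_of_nonneg_left hB (hG.w_nonneg v b)
    nlinarith [habs, hG.w_nonneg b v, hwvb]
  · -- adjacent to neither
    have hu0 : w u b = 0 := by rw [hwub]; exact le_antisymm (not_lt.mp hbu) (hG.w_nonneg b u)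
    have hv0 : w v b = 0 := by rw [hwvb]; exact le_antisymm (not_lt.mp hbv) (hG.w_nonneg b v)
    simp only [if_neg (fun h : 0 < w b u ∧ ¬ 0 < w b v => hbu h.1),
      if_neg (fun h : 0 < w b v ∧ ¬ 0 < w b u => hbv h.1),
      if_neg (fun h : 0 < w b u ∧ 0 < w b v ∧ sgn b u * sgn b v = -sgn u v => hbu h.1),
      if_neg (fun h : 0 < w b u ∧ 0 < w b v ∧ sgn b u * sgn b v = sgn u v => hbu h.1), add_zero]
    rw [hu0, hv0]
    simp


lemma key (w sgn : Fin N → Fin N → ℝ) (hG : IsWSG w sgn)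
    (he : ∃ u v, 0 < w u v) (μ : ℝ) (x : Fin N → ℝ) (hx : x ≠ 0)
    (hmul : (lap w sgn).mulVec x = μ • x) :
    ∃ u v, 0 < w u v ∧ 2 * μ ≤ bracket w sgn u v := by
  obtain ⟨u₀, v₀, h₀⟩ := he
  rcases le_or_gt μ 0 with hμ | hμ
  · exact ⟨u₀, v₀, h₀, by nlinarith [bracket_nonneg w sgn hG u₀ v₀]⟩
  obtain ⟨⟨u, v⟩, hmemP, hmax⟩ := Finset.exists_max_image
      ((Finset.univ : Finset (Fin N × Fin N)).filter fun p => 0 < w p.1 p.2)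
      (fun p => |x p.1 - sgn p.1 p.2 * x p.2|)
      ⟨(u₀, v₀), by simp [h₀]⟩
  have hedge : 0 < w u v := by simpa using (Finset.mem_filter.mp hmemP).2
  set m := |x u - sgn u v * x v| with hm_def
  have hP : ∀ a c, 0 < w a c → |x a - sgn a c * x c| ≤ m := fun a c h =>
    hmax (a, c) (by simp [h])
  have hm0 : 0 ≤ m := abs_nonneg _
  rcases eq_or_lt_of_le hm0 with hm | hm
  · -- m = 0 : then μ = 0, contradicting μ > 0
    exfalso
    obtain ⟨a, ha⟩ := Function.ne_iff.mp hx
    have ha' : x a ≠ 0 := by simpa using ha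
    have hax : μ * x a = 0 := by
      have h1 := congrFun hmul a
      rw [mulVec_lap] at h1
      have h2 : ∀ b ∈ Finset.univ, w a b * (x a - sgn a b * x b) = 0 := by
        intro b _
        rcases (hG.w_nonneg a b).lt_or_eq with hw | hw
        · have h3 := hP a b hw
          rw [← hm] at h3
          have h4 : x a - sgn a b * x b = 0 := abs_eq_zero.mp (le_antisymm h3 (abs_nonneg _))
          rw [h4, mul_zero]
        · rw [← hw, zero_mul]
      rw [Finset.sum_eq_zero h2] at h1
      simpa using h1.symm
    rcases mul_eq_zero.mp hax with h | h
    · exact absurd h (ne_of_gt hμ)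
    · exact ha' h
  · refine ⟨u, v, hedge, ?_⟩
    have hequ : μ * x u = ∑ b, w u b * (x u - sgn u b * x b) := by
      rw [← mulVec_lap w sgn x u, hmul]; simp
    have heqv : μ * x v = ∑ b, w v b * (x v - sgn v b * x b) := by
      rw [← mulVec_lap w sgn x v, hmul]; simp
    have hEq : μ * (x u - sgn u v * x v)
        = ∑ b, (w u b * (x u - sgn u b * x b)
            - sgn u v * (w v b * (x v - sgn v b * x b))) := by
      rw [Finset.sum_sub_distrib, ← hequ, ← Finset.mul_sum, ← heqv]; ring
    have hg : ∀ b : Fin N,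
        2 * |w u b * (x u - sgn u b * x b) - sgn u v * (w v b * (x v - sgn v b * x b))|
          ≤ ((w u b + w v b)
            + (if 0 < w b u ∧ ¬ 0 < w b v then w b u else 0)
            + (if 0 < w b u ∧ 0 < w b v ∧ sgn b u * sgn b v = -sgn u v then w b u else 0)
            + (if 0 < w b v ∧ ¬ 0 < w b u then w b v else 0)
            + (if 0 < w b u ∧ 0 < w b v ∧ sgn b u * sgn b v = -sgn u v then w b v else 0)
            + (if 0 < w b u ∧ 0 < w b v ∧ sgn b u * sgn b v = sgn u v then |w b u - w b v| else 0))
            * m := fun b => term_bound w sgn hG x u v b m hP hedge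
    have hsum_g : ∑ b : Fin N, ((w u b + w v b)
            + (if 0 < w b u ∧ ¬ 0 < w b v then w b u else 0)
            + (if 0 < w b u ∧ 0 < w b v ∧ sgn b u * sgn b v = -sgn u v then w b u else 0)
            + (if 0 < w b v ∧ ¬ 0 < w b u then w b v else 0)
            + (if 0 < w b u ∧ 0 < w b v ∧ sgn b u * sgn b v = -sgn u v then w b v else 0)
            + (if 0 < w b u ∧ 0 < w b v ∧ sgn b u * sgn b v = sgn u v then |w b u - w b v| else 0))
        = bracket w sgn u v := by
      rw [bracket, deg, deg]
      simp only [Finset.sum_add_distrib]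
    have hchain : 2 * μ * m ≤ bracket w sgn u v * m := by
      have h1 : μ * m = |μ * (x u - sgn u v * x v)| := by
        rw [abs_mul, abs_of_pos hμ, hm_def]
      have h2 : |μ * (x u - sgn u v * x v)|
          ≤ ∑ b, |w u b * (x u - sgn u b * x b)
              - sgn u v * (w v b * (x v - sgn v b * x b))| := by
        rw [hEq]
        exact Finset.abs_sum_le_sum_abs _ _
      have h3 : ∑ b, 2 * |w u b * (x u - sgn u b * x b)
              - sgn u v * (w v b * (x v - sgn v b * x b))|
          ≤ ∑ b : Fin N, ((w u b + w v b)
            + (if 0 < w b u ∧ ¬ 0 < w b v then w b u else 0)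
            + (if 0 < w b u ∧ 0 < w b v ∧ sgn b u * sgn b v = -sgn u v then w b u else 0)
            + (if 0 < w b v ∧ ¬ 0 < w b u then w b v else 0)
            + (if 0 < w b u ∧ 0 < w b v ∧ sgn b u * sgn b v = -sgn u v then w b v else 0)
            + (if 0 < w b u ∧ 0 < w b v ∧ sgn b u * sgn b v = sgn u v then |w b u - w b v| else 0))
            * m := Finset.sum_le_sum fun b _ => hg b
      rw [← Finset.sum_mul, hsum_g, ← Finset.mul_sum] at h3
      calc 2 * μ * m = 2 * (μ * m) := by ring
        _ = 2 * |μ * (x u - sgn u v * x v)| := by rw [h1]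
        _ ≤ 2 * ∑ b, |w u b * (x u - sgn u b * x b)
              - sgn u v * (w v b * (x v - sgn v b * x b))| := by linarith
        _ ≤ bracket w sgn u v * m := h3
    exact le_of_mul_le_mul_right hchain hm


/-- For a weighted signed graph with at least one edge, the largest
eigenvalue of the signed Laplacian `L^σ` is at most
`½ max_{u∼v} [ d(u) + d(v) + Σ_{u'∼u, u'≁v} w(u',u)
  + Σ_{u'∼u, u'∼v, σ(u',u)σ(u',v) = −σ(u,v)} w(u',u)
  + Σ_{u'∼v, u'≁u} w(u',v) + Σ_{u'∼u, u'∼v, σ(u',u)σ(u',v) = −σ(u,v)} w(u',v)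
  + Σ_{u'∼u, u'∼v, σ(u',u)σ(u',v) = σ(u,v)} |w(u',u) − w(u',v)| ]`. -/
theorem lap_top_eigenvalue_bound {N : ℕ} (hN : 0 < N) (w sgn : Fin N → Fin N → ℝ)
    (hG : IsWSG w sgn) (he : ∃ u v, 0 < w u v) :
    evals (lap w sgn) ⟨N - 1, by omega⟩ ≤
      1 / 2 * sSup {x | ∃ u v, 0 < w u v ∧
        x = deg w u + deg w v
          + (∑ u', if 0 < w u' u ∧ ¬ 0 < w u' v then w u' u else 0)
          + (∑ u', if 0 < w u' u ∧ 0 < w u' v ∧ sgn u' u * sgn u' v = -sgn u v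
              then w u' u else 0)
          + (∑ u', if 0 < w u' v ∧ ¬ 0 < w u' u then w u' v else 0)
          + (∑ u', if 0 < w u' u ∧ 0 < w u' v ∧ sgn u' u * sgn u' v = -sgn u v
              then w u' v else 0)
          + (∑ u', if 0 < w u' u ∧ 0 < w u' v ∧ sgn u' u * sgn u' v = sgn u v
              then |w u' u - w u' v| else 0)} := by
  have hherm : (lap w sgn).IsHermitian := by
    refine Matrix.IsHermitian.ext fun i j => ?_
    simp only [lap, adj, Matrix.sub_apply, Matrix.diagonal_apply, Matrix.of_apply,
      RCLike.star_def, starRingEnd_apply, star_trivial]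
    rw [hG.w_symm j i, hG.sgn_symm j i]
    by_cases h : i = j <;> simp [h, eq_comm]
  -- the set
  set S : Set ℝ := {x | ∃ u v, 0 < w u v ∧ x = bracket w sgn u v} with hS_def
  have hgoal : evals (lap w sgn) ⟨N - 1, by omega⟩ ≤ 1 / 2 * sSup S := by
    have hSfin : S.Finite := by
      apply Set.Finite.subset (Set.finite_range fun p : Fin N × Fin N => bracket w sgn p.1 p.2)
      rintro y ⟨u, v, -, rfl⟩
      exact ⟨(u, v), rfl⟩
    have hSbdd : BddAbove S := hSfin.bddAbove
    rw [evals, dif_pos hherm]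
    set i := Tuple.sort hherm.eigenvalues ⟨N - 1, by omega⟩ with hi
    set μ := hherm.eigenvalues i with hμ
    set y := (WithLp.equiv 2 (Fin N → ℝ)) (hherm.eigenvectorBasis i) with hy
    have hy0 : y ≠ 0 := by
      intro h
      exact hherm.eigenvectorBasis.orthonormal.ne_zero i ((WithLp.equiv 2 (Fin N → ℝ)).injective h)
    have hmul : (lap w sgn).mulVec y = μ • y := hherm.mulVec_eigenvectorBasis i
    obtain ⟨u, v, huv, hle⟩ := key w sgn hG he μ y hy0 hmul
    have hmem : bracket w sgn u v ∈ S := ⟨u, v, huv, rfl⟩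
    have := le_csSup hSbdd hmem
    linarith
  exact hgoal

end SignedGraph
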